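/- Let X be a real Hilbert space, let f : X → ℝ∪{+∞} be a proper Φ_lsc-convex function and let x̄ ∈ dom(f). If there exist ρ ≥ 0 and δ > 0 such that f(x) ≥ f(x̄) − ρ‖x − x̄‖² for all x with ‖x − x̄‖ < δ, then there exists ρ̄ ≥ 0 such that f(x) ≥ f(x̄) − ρ̄‖x − x̄‖² for all x ∈ X. -/

import Mathlib

open scoped RealInnerProductSpace

noncomputable section

/-- The class `Φ_lsc` of continuous functions `x ↦ -a‖x‖² + ⟪v,x⟫ + c` with `a ≥ 0`. -/
def PhiLsc (X : Type*) [NormedAddCommGroup X] [InnerProductSpace ℝ X] : Set (X → ℝ) :=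
  {φ | ∃ a : ℝ, ∃ v : X, ∃ c : ℝ, 0 ≤ a ∧ ∀ x, φ x = -a * ‖x‖ ^ 2 + ⟪v, x⟫ + c}

/-- The support set `supp(f) = {φ ∈ Φ_lsc : φ ≤ f}` of `f : X → ℝ∪{+∞}`. -/
def PhiSupp {X : Type*} [NormedAddCommGroup X] [InnerProductSpace ℝ X] (f : X → EReal) :
    Set (X → ℝ) :=
  {φ | φ ∈ PhiLsc X ∧ ∀ x, (φ x : EReal) ≤ f x}

/-- The effective domain of `f`. -/
def PhiDom {X : Type*} (f : X → EReal) : Set X := {x | f x < ⊤}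

/-- `f` is `Φ_lsc`-convex: it is the pointwise supremum of its support set. -/
def PhiConvexOn {X : Type*} [NormedAddCommGroup X] [InnerProductSpace ℝ X] (f : X → EReal) :
    Prop :=
  ∀ x, f x = ⨆ φ ∈ PhiSupp f, (φ x : EReal)

/-- The set of `ε`-`Φ_lsc`-subgradients of `f` at `xb`:
pairs `(a,v)`, `a ≥ 0`, with `f x - f xb ≥ ⟪v, x - xb⟫ - a‖x‖² + a‖xb‖² - ε` for all `x`. -/
def SubLscE {X : Type*} [NormedAddCommGroup X] [InnerProductSpace ℝ X] (f : X → EReal)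
    (ε : ℝ) (xb : X) : Set (ℝ × X) :=
  {p | 0 ≤ p.1 ∧ ∀ x : X,
    f xb + ((⟪p.2, x - xb⟫ - p.1 * ‖x‖ ^ 2 + p.1 * ‖xb‖ ^ 2 - ε : ℝ) : EReal) ≤ f x}

/-- The set of local `Φ_lsc`-subgradients of `f` at `xb`. -/
def SubLscLoc {X : Type*} [NormedAddCommGroup X] [InnerProductSpace ℝ X] (f : X → EReal)
    (xb : X) : Set (ℝ × X) :=
  {p | 0 ≤ p.1 ∧ ∃ δ : ℝ, 0 < δ ∧ ∀ x : X, ‖x - xb‖ < δ →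
    f xb + ((⟪p.2, x - xb⟫ - p.1 * ‖x‖ ^ 2 + p.1 * ‖xb‖ ^ 2 : ℝ) : EReal) ≤ f x}

/-- `f` is paraconvex (with exponent 2). -/
def ParaconvexOn {X : Type*} [NormedAddCommGroup X] [InnerProductSpace ℝ X]
    (f : X → EReal) : Prop :=
  ∃ C : ℝ, 0 < C ∧ ∀ x y : X, ∀ t : ℝ, t ∈ Set.Icc (0 : ℝ) 1 →
    f (t • x + (1 - t) • y) ≤
      (t : EReal) * f x + ((1 - t : ℝ) : EReal) * f y + ((C * ‖x - y‖ ^ 2 : ℝ) : EReal)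

/-- The proximal subdifferential of `f` at `xb`. -/
def ProxSub {X : Type*} [NormedAddCommGroup X] [InnerProductSpace ℝ X] (f : X → EReal)
    (xb : X) : Set X :=
  {v | ∃ δ : ℝ, 0 < δ ∧ ∃ ρ : ℝ, 0 ≤ ρ ∧ ∀ x : X, ‖x - xb‖ < δ →
    f xb + ((⟪v, x - xb⟫ - ρ / 2 * ‖x - xb‖ ^ 2 : ℝ) : EReal) ≤ f x}

/-- The Dini subdifferential of `f` at `xb`. -/
def DiniSub {X : Type*} [NormedAddCommGroup X] [InnerProductSpace ℝ X] (f : X → EReal)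
    (xb : X) : Set X :=
  {w | ∀ h : X, ∀ t : ℕ → ℝ, ∀ u : ℕ → X, (∀ n, 0 < t n) →
    Filter.Tendsto t Filter.atTop (nhds 0) → Filter.Tendsto u Filter.atTop (nhds h) →
    ((⟪w, h⟫ : ℝ) : EReal) ≤
      Filter.liminf (fun n => (f (xb + t n • u n) - f xb) * (((t n)⁻¹ : ℝ) : EReal)) Filter.atTop}

/-- The `Φ_lsc`-subgradients of a real-valued `f` at `xb`. -/
def SubLscR {X : Type*} [NormedAddCommGroup X] [InnerProductSpace ℝ X] (f : X → ℝ)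
    (xb : X) : Set (ℝ × X) :=
  {p | 0 ≤ p.1 ∧ ∀ x : X,
    ⟪p.2, x - xb⟫ - p.1 * ‖x‖ ^ 2 + p.1 * ‖xb‖ ^ 2 ≤ f x - f xb}

/-- a local quadratic minorant `f(x) ≥ f(xb) - ρ‖x-xb‖²` near `xb` of a proper
`Φ_lsc`-convex function extends to a global one. -/
theorem stmt_2 {X : Type*} [NormedAddCommGroup X] [InnerProductSpace ℝ X] [CompleteSpace X]
    (f : X → EReal) (hbot : ∀ x, f x ≠ ⊥)
    (hsupp : (PhiSupp f).Nonempty) (hdom : (PhiDom f).Nonempty)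
    (hconv : PhiConvexOn f) (xb : X) (hxb : xb ∈ PhiDom f)
    (ρ δ : ℝ) (hρ : 0 ≤ ρ) (hδ : 0 < δ)
    (hloc : ∀ x : X, ‖x - xb‖ < δ → f xb + ((-(ρ * ‖x - xb‖ ^ 2) : ℝ) : EReal) ≤ f x) :
    ∃ ρ' : ℝ, 0 ≤ ρ' ∧ ∀ x : X, f xb + ((-(ρ' * ‖x - xb‖ ^ 2) : ℝ) : EReal) ≤ f x := by
  obtain ⟨φ, hφmem, hφle⟩ := hsupp
  obtain ⟨a, v, c, ha, hφ⟩ := hφmem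
  set M : ℝ := (f xb).toReal with hM
  have hfxb : f xb = (M : EReal) :=
    (EReal.coe_toReal (ne_of_lt hxb) (hbot xb)).symm
  have hφxb : φ xb ≤ M := by
    have := hφle xb
    rw [hfxb] at this
    exact_mod_cast this
  set w : X := v - (2 * a) • xb with hw
  refine ⟨ρ + a + ‖w‖ / δ + (M - φ xb) / δ ^ 2, ?_, ?_⟩
  · have h1 : (0:ℝ) ≤ ‖w‖ / δ := div_nonneg (norm_nonneg _) hδ.le
    have h2 : (0:ℝ) ≤ (M - φ xb) / δ ^ 2 :=
      div_nonneg (by linarith) (by positivity)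
    linarith
  · intro x
    set r : ℝ := ‖x - xb‖ with hr
    have hr0 : 0 ≤ r := norm_nonneg _
    by_cases hcase : r < δ
    · have hle : ((-((ρ + a + ‖w‖ / δ + (M - φ xb) / δ ^ 2) * r ^ 2) : ℝ) : EReal)
          ≤ ((-(ρ * r ^ 2) : ℝ) : EReal) := by
        apply EReal.coe_le_coe_iff.2
        have h1 : (0:ℝ) ≤ ‖w‖ / δ := div_nonneg (norm_nonneg _) hδ.le
        have h2 : (0:ℝ) ≤ (M - φ xb) / δ ^ 2 :=
          div_nonneg (by linarith) (by positivity)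
        nlinarith [sq_nonneg r]
      calc f xb + ((-((ρ + a + ‖w‖ / δ + (M - φ xb) / δ ^ 2) * r ^ 2) : ℝ) : EReal)
          ≤ f xb + ((-(ρ * r ^ 2) : ℝ) : EReal) := add_le_add (le_refl _) hle
        _ ≤ f x := hloc x hcase
    · push_neg at hcase
      have key : φ x = φ xb - a * r ^ 2 + ⟪w, x - xb⟫ := by
        have h1 : r ^ 2 = ‖x‖ ^ 2 - 2 * ⟪x, xb⟫ + ‖xb‖ ^ 2 := by
          rw [hr]; exact norm_sub_sq_real x xb
        have h2 : ⟪w, x - xb⟫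
            = ⟪v, x⟫ - ⟪v, xb⟫ - (2 * a) * ⟪xb, x⟫ + (2 * a) * ‖xb‖ ^ 2 := by
          simp [hw, inner_sub_left, inner_sub_right, real_inner_smul_left,
            real_inner_self_eq_norm_sq]
          ring
        have h3 : ⟪x, xb⟫ = ⟪xb, x⟫ := real_inner_comm xb x
        rw [hφ x, hφ xb, h2, h1, h3]; ring
      have hwbound : -(‖w‖ * r) ≤ ⟪w, x - xb⟫ := by
        have := real_inner_le_norm (-w) (x - xb)
        have h4 : ⟪-w, x - xb⟫ = -⟪w, x - xb⟫ := by
          simp [inner_neg_left]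
        rw [h4, norm_neg] at this
        linarith
      have hreal : M + -((ρ + a + ‖w‖ / δ + (M - φ xb) / δ ^ 2) * r ^ 2) ≤ φ x := by
        rw [key]
        have hδr : δ ≤ r := hcase
        have hnw : (0:ℝ) ≤ ‖w‖ := norm_nonneg _
        have e1 : ‖w‖ / δ * r ^ 2 ≥ ‖w‖ * r := by
          rw [ge_iff_le, div_mul_eq_mul_div, le_div_iff₀ hδ]
          nlinarith [mul_nonneg (mul_nonneg hnw hr0) (sub_nonneg.2 hδr)]
        have e2 : (M - φ xb) / δ ^ 2 * r ^ 2 ≥ M - φ xb := by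
          rw [ge_iff_le, div_mul_eq_mul_div, le_div_iff₀ (by positivity : (0:ℝ) < δ ^ 2)]
          nlinarith [mul_le_mul_of_nonneg_left (pow_le_pow_left₀ hδ.le hδr 2) (sub_nonneg.2 hφxb)]
        nlinarith [sq_nonneg r]
      calc f xb + ((-((ρ + a + ‖w‖ / δ + (M - φ xb) / δ ^ 2) * r ^ 2) : ℝ) : EReal)
          = ((M + -((ρ + a + ‖w‖ / δ + (M - φ xb) / δ ^ 2) * r ^ 2) : ℝ) : EReal) := by
            rw [hfxb]; exact_mod_cast rfl
        _ ≤ ((φ x : ℝ) : EReal) := EReal.coe_le_coe_iff.2 hreal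
        _ ≤ f x := hφle x
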